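/- Let ε > 0 and let C : X → ℝ ∪ {+∞} where X = Fin 𝒯 → Fin N is the finite index set, and define h(M) = ⟨C,M⟩ + εD(M) for nonnegative tensors M and h(M) = +∞ if M has a negative entry. Then the Fenchel conjugate of h satisfies, for every T ∈ ℝ^X, h*(T) = ε·Σ_{x∈X} (exp((T(x) − C(x))/ε) − 1) = ε⟨K, exp(T/ε)⟩ − N^𝒯·ε, where exp(T/ε) is the elementwise exponential; in particular h*(T) is finite for every T ∈ ℝ^X, i.e., h is co-finite. -/

import Mathlib

open scoped BigOperators
open Filter

noncomputable section

open scoped Classical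

abbrev Tens (T N : ℕ) := (Fin T → Fin N) → ℝ

/-- Marginal projection `P_t(M)`. -/
def tproj {T N : ℕ} (t : Fin T) (M : Tens T N) : Fin N → ℝ :=
  fun i => ∑ x : Fin T → Fin N, if x t = i then M x else 0

/-- Bimarginal projection `P_{t₁,t₂}(M)`. -/
def tbiproj {T N : ℕ} (t₁ t₂ : Fin T) (M : Tens T N) : Fin N × Fin N → ℝ :=
  fun p => ∑ x : Fin T → Fin N, if x t₁ = p.1 ∧ x t₂ = p.2 then M x else 0

/-- Entropy `D(M)` (note `Real.log 0 = 0`, so the convention `0 · log 0 = 0` holds). -/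
def entropy {T N : ℕ} (M : Tens T N) : ℝ :=
  ∑ x : Fin T → Fin N, (M x * Real.log (M x) - M x + 1)

/-- `⟨C, M⟩` (in `EReal`, where `0 · ⊤ = 0`). -/
def einner {T N : ℕ} (C : (Fin T → Fin N) → EReal) (M : Tens T N) : EReal :=
  ∑ x : Fin T → Fin N, C x * ((M x : ℝ) : EReal)

/-- `exp(-c/ε)` with the convention `exp(-∞) = 0`. -/
def expNegE (ε : ℝ) (c : EReal) : ℝ :=
  if c = ⊤ then 0 else Real.exp (-c.toReal / ε)

/-- Fenchel conjugate `h*(T) = sup_M ⟨T,M⟩ - h(M)` over tensors. -/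
def fconj {ι : Type*} [Fintype ι] (h : (ι → ℝ) → EReal) (y : ι → ℝ) : EReal :=
  ⨆ x : ι → ℝ, (((∑ i, y i * x i : ℝ)) : EReal) - h x

lemma ecoe_sum {ι : Type*} (s : Finset ι) (f : ι → ℝ) :
    ((∑ i ∈ s, f i : ℝ) : EReal) = ∑ i ∈ s, ((f i : ℝ) : EReal) := by
  induction s using Finset.cons_induction with
  | empty => simp
  | cons a s ha ih => rw [Finset.sum_cons, Finset.sum_cons, ← ih, EReal.coe_add]

lemma esum_ne_bot {ι : Type*} (s : Finset ι) (f : ι → EReal) (h : ∀ i ∈ s, f i ≠ ⊥) :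
    ∑ i ∈ s, f i ≠ ⊥ := by
  induction s using Finset.cons_induction with
  | empty => simp
  | cons a s ha ih =>
    rw [Finset.sum_cons, ne_eq, EReal.add_eq_bot_iff]
    push_neg
    exact ⟨h a (Finset.mem_cons_self a s), ih fun i hi => h i (Finset.mem_cons_of_mem hi)⟩

lemma key_ineq {ε : ℝ} (hε : 0 < ε) (a m : ℝ) (hm : 0 ≤ m) :
    a * m - ε * (m * Real.log m - m) ≤ ε * Real.exp (a / ε) := by
  rcases eq_or_lt_of_le hm with hm0 | hm0
  · rw [← hm0]; simp; positivity
  · have h1 := Real.add_one_le_exp (a / ε - Real.log m)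
    have h2 : Real.exp (a / ε - Real.log m) = Real.exp (a / ε) / m := by
      rw [Real.exp_sub, Real.exp_log hm0]
    rw [h2] at h1
    have h3 : (ε * m) * (a / ε - Real.log m + 1) ≤ (ε * m) * (Real.exp (a / ε) / m) :=
      mul_le_mul_of_nonneg_left h1 (by positivity)
    have e1 : (ε * m) * (a / ε - Real.log m + 1) = a * m - ε * (m * Real.log m - m) := by
      field_simp; ring
    have e2 : (ε * m) * (Real.exp (a / ε) / m) = ε * Real.exp (a / ε) := by
      field_simp
    rw [e1, e2] at h3
    exact h3

/-- For `h(M) = ⟨C,M⟩ + εD(M)` on nonnegative tensors (`+∞` otherwise),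
the Fenchel conjugate is `h*(T) = ε ∑_x (exp((T(x)-C(x))/ε) - 1) = ε⟨K, exp(T/ε)⟩ - N^𝒯ε`;
in particular `h*` is finite everywhere, i.e. `h` is co-finite. -/
theorem conjugate_of_entropy_cost
    (T N : ℕ) (ε : ℝ) (hε : 0 < ε)
    (C : (Fin T → Fin N) → EReal) (hC : ∀ x, C x ≠ ⊥)
    (K : Tens T N) (hK : ∀ x, K x = expNegE ε (C x))
    (h : Tens T N → EReal)
    (hh : ∀ M : Tens T N, h M =
      if ∀ x, 0 ≤ M x then einner C M + ((ε * entropy M : ℝ) : EReal) else ⊤) :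
    ∀ Tt : Tens T N,
      fconj h Tt = (((ε * ∑ x : Fin T → Fin N, (K x * Real.exp (Tt x / ε) - 1) : ℝ)) : EReal) ∧
      ε * (∑ x : Fin T → Fin N, (K x * Real.exp (Tt x / ε) - 1))
        = ε * (∑ x : Fin T → Fin N, K x * Real.exp (Tt x / ε)) - (N : ℝ) ^ T * ε ∧
      fconj h Tt ≠ ⊤ := by
  intro Tt
  -- the easy algebraic identity first
  have part2 : ε * (∑ x : Fin T → Fin N, (K x * Real.exp (Tt x / ε) - 1))
      = ε * (∑ x : Fin T → Fin N, K x * Real.exp (Tt x / ε)) - (N : ℝ) ^ T * ε := by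
    rw [Finset.sum_sub_distrib, Finset.sum_const, Finset.card_univ]
    have hcard : Fintype.card (Fin T → Fin N) = N ^ T := by simp
    rw [hcard]
    ring
  set c' : (Fin T → Fin N) → ℝ := fun x => if C x = ⊤ then 0 else (C x).toReal with hc'
  have hK0 : ∀ x, 0 ≤ K x := by
    intro x; rw [hK x]; unfold expNegE; split
    · exact le_refl 0
    · exact (Real.exp_pos _).le
  have hKtop : ∀ x, C x = ⊤ → K x = 0 := by
    intro x hx; rw [hK x]; unfold expNegE; rw [if_pos hx]
  have hKr : ∀ x, C x ≠ ⊤ → K x = Real.exp (-(c' x) / ε) := by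
    intro x hx; rw [hK x]; unfold expNegE; rw [if_neg hx]; simp only [hc', if_neg hx]
  -- the value of einner on admissible tensors
  have heinner : ∀ M : Tens T N, (∀ x, C x = ⊤ → M x = 0) →
      einner C M = ((∑ x : Fin T → Fin N, c' x * M x : ℝ) : EReal) := by
    intro M hM
    rw [einner, ecoe_sum]
    apply Finset.sum_congr rfl
    intro x _
    by_cases hx : C x = ⊤
    · rw [hM x hx, hx]; simp [hc', hx]
    · obtain ⟨r, hr⟩ : ∃ r : ℝ, C x = (r : EReal) :=
        ⟨(C x).toReal, (EReal.coe_toReal hx (hC x)).symm⟩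
      have hcr : c' x = r := by simp [hc', hr]
      rw [hr, hcr, ← EReal.coe_mul]
  -- per-term upper bound
  have hterm : ∀ (x : Fin T → Fin N) (m : ℝ), 0 ≤ m → (C x = ⊤ → m = 0) →
      Tt x * m - c' x * m - ε * (m * Real.log m - m + 1)
        ≤ ε * (K x * Real.exp (Tt x / ε) - 1) := by
    intro x m hm hmx
    by_cases hx : C x = ⊤
    · rw [hmx hx, hKtop x hx]
      simp
    · have hKx : K x * Real.exp (Tt x / ε) = Real.exp ((Tt x - c' x) / ε) := by
        rw [hKr x hx, ← Real.exp_add]; ring_nf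
      have hkey := key_ineq hε (Tt x - c' x) m hm
      rw [hKx]
      nlinarith [hkey]
  -- per-term equality at the maximizer
  have hteq : ∀ (x : Fin T → Fin N),
      Tt x * (K x * Real.exp (Tt x / ε)) - c' x * (K x * Real.exp (Tt x / ε))
        - ε * ((K x * Real.exp (Tt x / ε)) * Real.log (K x * Real.exp (Tt x / ε))
            - (K x * Real.exp (Tt x / ε)) + 1)
        = ε * (K x * Real.exp (Tt x / ε) - 1) := by
    intro x
    by_cases hx : C x = ⊤
    · rw [hKtop x hx]; simp
    · have hKx : K x * Real.exp (Tt x / ε) = Real.exp ((Tt x - c' x) / ε) := by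
        rw [hKr x hx, ← Real.exp_add]; ring_nf
      rw [hKx, Real.log_exp]
      field_simp
      ring
  -- real-valued objective rearrangement
  have hobj : ∀ M : Tens T N,
      (∑ x : Fin T → Fin N, Tt x * M x) - ((∑ x : Fin T → Fin N, c' x * M x) + ε * entropy M)
        = ∑ x : Fin T → Fin N,
            (Tt x * M x - c' x * M x - ε * (M x * Real.log (M x) - M x + 1)) := by
    intro M
    rw [entropy, Finset.mul_sum, ← Finset.sum_add_distrib, ← Finset.sum_sub_distrib]
    exact Finset.sum_congr rfl fun x _ => by ring
  set S : ℝ := ε * ∑ x : Fin T → Fin N, (K x * Real.exp (Tt x / ε) - 1) with hS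
  have hSsum : S = ∑ x : Fin T → Fin N, ε * (K x * Real.exp (Tt x / ε) - 1) := by
    rw [hS, Finset.mul_sum]
  -- upper bound for each M
  have hub : ∀ M : Tens T N,
      ((∑ x : Fin T → Fin N, Tt x * M x : ℝ) : EReal) - h M ≤ (S : EReal) := by
    intro M
    rw [hh M]
    by_cases hM : ∀ x, 0 ≤ M x
    · rw [if_pos hM]
      by_cases htop : ∀ x, C x = ⊤ → M x = 0
      · rw [heinner M htop, ← EReal.coe_add, ← EReal.coe_sub, EReal.coe_le_coe_iff,
          hobj M, hSsum]
        exact Finset.sum_le_sum fun x _ => hterm x (M x) (hM x) (htop x)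
      · push_neg at htop
        obtain ⟨x₀, hx₀, hMx₀⟩ := htop
        have hpos : (0 : ℝ) < M x₀ := lt_of_le_of_ne (hM x₀) (Ne.symm hMx₀)
        have hbot : ∀ x : Fin T → Fin N, C x * ((M x : ℝ) : EReal) ≠ ⊥ := by
          intro x
          by_cases hx : C x = ⊤
          · rcases eq_or_lt_of_le (hM x) with h0 | h0
            · rw [hx, ← h0]; simp
            · rw [hx, EReal.top_mul_coe_of_pos h0]; simp
          · obtain ⟨r, hr⟩ : ∃ r : ℝ, C x = (r : EReal) :=
              ⟨(C x).toReal, (EReal.coe_toReal hx (hC x)).symm⟩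
            rw [hr, ← EReal.coe_mul]; exact EReal.coe_ne_bot _
        have hein : einner C M = ⊤ := by
          rw [einner, ← Finset.add_sum_erase _ _ (Finset.mem_univ x₀), hx₀,
            EReal.top_mul_coe_of_pos hpos]
          exact EReal.top_add_of_ne_bot (esum_ne_bot _ _ fun i _ => hbot i)
        rw [hein, EReal.top_add_of_ne_bot (EReal.coe_ne_bot _), EReal.sub_top]
        exact bot_le
    · rw [if_neg hM, EReal.sub_top]
      exact bot_le
  -- value at the maximizer
  set Mstar : Tens T N := fun x => K x * Real.exp (Tt x / ε) with hMstar
  have hMs0 : ∀ x, 0 ≤ Mstar x := fun x => mul_nonneg (hK0 x) (Real.exp_pos _).le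
  have hMsC : ∀ x, C x = ⊤ → Mstar x = 0 := by
    intro x hx; simp only [hMstar]; rw [hKtop x hx, zero_mul]
  have hval : ((∑ x : Fin T → Fin N, Tt x * Mstar x : ℝ) : EReal) - h Mstar = (S : EReal) := by
    rw [hh Mstar, if_pos hMs0, heinner Mstar hMsC, ← EReal.coe_add, ← EReal.coe_sub]
    congr 1
    rw [hobj Mstar, hSsum]
    refine Finset.sum_congr rfl fun x _ => ?_
    simp only [hMstar]
    exact hteq x
  have hmain : fconj h Tt = (S : EReal) := by
    apply le_antisymm
    · exact iSup_le hub
    · rw [← hval]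
      exact le_iSup (fun M : Tens T N => ((∑ x : Fin T → Fin N, Tt x * M x : ℝ) : EReal) - h M)
        Mstar
  exact ⟨hmain, part2, by rw [hmain]; exact EReal.coe_ne_top _⟩
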